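/- Let C be a category, R a precongruence on C, and Σ a family of arrows of C. The quotient functor Q_R : C → C/R and the localization functor P_Σ : C → C[Σ⁻¹] are isomorphic objects of the coslice category C ↓ Cat if and only if Σ ⊆ σR and R ⊆ ρΣ. -/

import Mathlib

open CategoryTheory

variable {C : Type*} [Category C]

/-- `Q_R` and `P_Σ` are isomorphic in the coslice `C ↓ Cat`: mutually inverse functors
commuting with the quotient and localization functors. -/
def QuotIsoLoc (R : HomRel C) (S : MorphismProperty C) : Prop :=
  ∃ (φ : Quotient R ⥤ S.Localization) (ψ : S.Localization ⥤ Quotient R),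
    Quotient.functor R ⋙ φ = S.Q ∧ S.Q ⋙ ψ = Quotient.functor R ∧
    φ ⋙ ψ = 𝟭 (Quotient R) ∧ ψ ⋙ φ = 𝟭 S.Localization

/-- `σR`: the arrows `f` admitting a homotopy inverse with respect to the least congruence
containing `R` (i.e. the kernel of the quotient functor `Q_R`). -/
def sigmaRel (R : HomRel C) : MorphismProperty C :=
  fun X Y f => ∃ g : Y ⟶ X,
    (Quotient.functor R).map (f ≫ g) = (Quotient.functor R).map (𝟙 X) ∧
    (Quotient.functor R).map (g ≫ f) = (Quotient.functor R).map (𝟙 Y)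

/-- `ρΣ`: the kernel-pair congruence of the localization functor `P_Σ`. -/
def rhoRel (S : MorphismProperty C) : HomRel C :=
  fun {_ _} f g => S.Q.map f = S.Q.map g

/-- Corollary 3.6 (concreto1): `Q_R` and `P_Σ` are isomorphic in `C ↓ Cat`
iff `Σ ⊆ σR` and `R ⊆ ρΣ`. -/
theorem stmt4 (R : HomRel C) (S : MorphismProperty C) :
    QuotIsoLoc R S ↔
      ((S ≤ sigmaRel R) ∧ ∀ ⦃X Y : C⦄ (f g : X ⟶ Y), R f g → rhoRel S f g) := by
  constructor
  · rintro ⟨φ, ψ, h1, h2, h3, h4⟩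
    constructor
    · intro X Y f hf
      have hiso : IsIso (S.Q.map f) := Localization.inverts S.Q S f hf
      have := Functor.congr_hom h2 f
      have hiso2 : IsIso ((Quotient.functor R).map f) := by
        have : (Quotient.functor R).map f =
            eqToHom (by rw [← h2]; rfl) ≫ ψ.map (S.Q.map f) ≫
              eqToHom (by rw [← h2]; rfl) := (Functor.congr_hom h2.symm f)
        rw [this]
        infer_instance
      refine ⟨(Quotient.functor R).preimage (inv ((Quotient.functor R).map f)), ?_, ?_⟩
      · rw [CategoryTheory.Functor.map_comp, Functor.map_preimage, IsIso.hom_inv_id, CategoryTheory.Functor.map_id]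
      · rw [CategoryTheory.Functor.map_comp, Functor.map_preimage, IsIso.inv_hom_id, CategoryTheory.Functor.map_id]
    · intro X Y f g hfg
      have hq : (Quotient.functor R).map f = (Quotient.functor R).map g :=
        CategoryTheory.Quotient.sound R hfg
      have hf := Functor.congr_hom h1.symm f
      have hg := Functor.congr_hom h1.symm g
      show S.Q.map f = S.Q.map g
      rw [hf, hg]
      simp only [Functor.comp_map]
      rw [hq]
  · rintro ⟨hS, hR⟩
    have hinv : S.IsInvertedBy (Quotient.functor R) := by
      intro X Y f hf
      obtain ⟨g, hg1, hg2⟩ := hS f hf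
      rw [CategoryTheory.Functor.map_comp, CategoryTheory.Functor.map_id] at hg1 hg2
      exact ⟨(Quotient.functor R).map g, hg1, hg2⟩
    refine ⟨CategoryTheory.Quotient.lift R S.Q (fun _ _ f g h => hR f g h),
      Localization.Construction.lift (Quotient.functor R) hinv,
      CategoryTheory.Quotient.lift_spec _ _ _, Localization.Construction.fac _ _, ?_, ?_⟩
    · apply CategoryTheory.Quotient.lift_unique' R
      rw [← Functor.assoc, CategoryTheory.Quotient.lift_spec R S.Q (fun _ _ f g h => hR f g h), Localization.Construction.fac,
        Functor.comp_id]
    · apply Localization.Construction.uniq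
      rw [← Functor.assoc]
      change (S.Q ⋙ _) ⋙ _ = _
      rw [Localization.Construction.fac, CategoryTheory.Quotient.lift_spec R S.Q (fun _ _ f g h => hR f g h), Functor.comp_id]
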